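/- Let P > 0, let w₁* ∈ (0, P), set w₂* := P − w₁*, and let δ, q > 0 satisfy δ < P/w₁* and |w₂*/w₁* − q| < δ. Define n̄₁ := P/(1 + q) and n̄₂ := P − n̄₁. Let C : ℝ × ℝ → ℝ be Lipschitz continuous with constant L_C with respect to the supremum norm on ℝ × ℝ, and suppose C(w₁*, w₂*) > 0. Then C(n̄₁, n̄₂)/C(w₁*, w₂*) ≤ 1 + (L_C/C(w₁*, w₂*))·δ·w₁*/(P/w₁* − δ). -/

import Mathlib

/-- Price-of-anarchy bound: for a Lipschitz societal cost `C` (w.r.t. the sup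
norm on `ℝ × ℝ`) with `C(w*) > 0`, the cost of the zero-drift split induced by
a `δ`-accurate rational approximation `q` of `w₂*/w₁*` satisfies
`C(n̄)/C(w*) ≤ 1 + (L_C/C(w*))·δ·w₁*/(P/w₁* − δ)`. -/
theorem price_of_anarchy_bound (P w₁s δ q : ℝ) (hP : 0 < P)
    (hw : w₁s ∈ Set.Ioo 0 P) (hδ : 0 < δ) (hq : 0 < q)
    (hδP : δ < P / w₁s) (happrox : |(P - w₁s) / w₁s - q| < δ)
    (C : ℝ × ℝ → ℝ) (L_C : NNReal) (hLip : LipschitzWith L_C C)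
    (hC : 0 < C (w₁s, P - w₁s)) :
    C (P / (1 + q), P - P / (1 + q)) / C (w₁s, P - w₁s)
      ≤ 1 + ((L_C : ℝ) / C (w₁s, P - w₁s)) * δ * w₁s / (P / w₁s - δ) := by
  obtain ⟨hw1, hw2⟩ := hw
  have h1q : (0:ℝ) < 1 + q := by linarith
  have hden : (0:ℝ) < P / w₁s - δ := by linarith
  set n₁ := P / (1 + q) with hn₁
  -- the key distance bound
  have heq : n₁ - w₁s = w₁s * ((P - w₁s) / w₁s - q) / (1 + q) := by
    field_simp [hn₁]
    linear_combination (div_mul_cancel₀ P h1q.ne' : n₁ * (1 + q) = P)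
  have hle1q : P / w₁s - δ ≤ 1 + q := by
    have h1 : (P - w₁s) / w₁s - q < δ := lt_of_abs_lt happrox
    have h2 : (P - w₁s) / w₁s = P / w₁s - 1 := by field_simp
    linarith
  have hd : |n₁ - w₁s| ≤ δ * w₁s / (P / w₁s - δ) := by
    rw [heq, abs_div, abs_mul, abs_of_pos hw1, abs_of_pos h1q]
    calc w₁s * |(P - w₁s) / w₁s - q| / (1 + q)
        ≤ w₁s * δ / (1 + q) := by
          gcongr
      _ ≤ δ * w₁s / (P / w₁s - δ) := by
          rw [mul_comm]
          gcongr
  -- Lipschitz bound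
  have hdist := hLip.dist_le_mul (n₁, P - n₁) (w₁s, P - w₁s)
  rw [Prod.dist_eq] at hdist
  have hdist2 : dist (P - n₁) (P - w₁s) = |n₁ - w₁s| := by
    rw [Real.dist_eq, abs_sub_comm]
    congr 1
    ring
  have hdist1 : dist n₁ w₁s = |n₁ - w₁s| := Real.dist_eq _ _
  rw [hdist1, hdist2, max_self] at hdist
  have hCle : C (n₁, P - n₁) ≤ C (w₁s, P - w₁s) + (L_C : ℝ) * |n₁ - w₁s| := by
    have := abs_sub_abs_le_abs_sub (C (n₁, P - n₁)) (C (w₁s, P - w₁s))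
    have h3 : C (n₁, P - n₁) - C (w₁s, P - w₁s) ≤ (L_C : ℝ) * |n₁ - w₁s| := by
      calc C (n₁, P - n₁) - C (w₁s, P - w₁s)
          ≤ |C (n₁, P - n₁) - C (w₁s, P - w₁s)| := le_abs_self _
        _ = dist (C (n₁, P - n₁)) (C (w₁s, P - w₁s)) := (Real.dist_eq _ _).symm
        _ ≤ (L_C : ℝ) * |n₁ - w₁s| := hdist
    linarith
  rw [div_le_iff₀ hC]
  have hLnn : (0:ℝ) ≤ (L_C : ℝ) := L_C.coe_nonneg
  have hfinal : (L_C : ℝ) * |n₁ - w₁s| ≤ (L_C : ℝ) * (δ * w₁s / (P / w₁s - δ)) := by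
    gcongr
  have hrhs : (1 + ((L_C : ℝ) / C (w₁s, P - w₁s)) * δ * w₁s / (P / w₁s - δ)) *
      C (w₁s, P - w₁s) = C (w₁s, P - w₁s) + (L_C : ℝ) * (δ * w₁s / (P / w₁s - δ)) := by
    have hDne : P / w₁s - δ ≠ 0 := hden.ne'
    rw [add_mul, one_mul]
    congr 1
    generalize P / w₁s - δ = D at hDne ⊢
    field_simp
  rw [hrhs]
  linarith
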